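/- Let X be a real random variable with mean μ and finite variance, and let α_n → ∞ be a sequence of positive reals. Then there exists N such that for every n ≥ N the function t ↦ λ_n(t) = E ψ_{α_n}(X − t) has exactly one zero t_n in ℝ; moreover t_n → μ as n → ∞. -/

import Mathlib

open MeasureTheory Filter

/-- The Huber score function: `ψ_α(x) = x` if `|x| ≤ α`, and `α · sign(x)` otherwise. -/
noncomputable def huberScore (α x : ℝ) : ℝ := if |x| ≤ α then x else α * Real.sign x

lemma huber_eq_clamp (α x : ℝ) (hα : 0 ≤ α) :
    huberScore α x = max (-α) (min α x) := by
  unfold huberScore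
  rcases le_or_gt (|x|) α with h | h
  · rw [if_pos h, abs_le] at *
    rw [min_eq_right h.2, max_eq_right h.1]
  · rw [if_neg (not_le.mpr h)]
    rcases le_or_gt x 0 with hx | hx
    · have hx' : x < -α := by
        rcases abs_cases x with ⟨h1,h2⟩|⟨h1,h2⟩ <;> linarith
      rw [Real.sign_of_neg (by linarith), min_eq_right (by linarith), max_eq_left hx'.le]
      ring
    · have hx' : α < x := by
        rcases abs_cases x with ⟨h1,h2⟩|⟨h1,h2⟩ <;> linarith
      rw [Real.sign_of_pos hx, min_eq_left hx'.le, max_eq_right (by linarith)]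
      ring

lemma huber_abs_le {α : ℝ} (hα : 0 ≤ α) (x : ℝ) : |huberScore α x| ≤ α := by
  rw [huber_eq_clamp α x hα, abs_le]
  constructor
  · exact le_max_left _ _
  · exact max_le (by linarith) (min_le_left _ _)

lemma huber_mono {α : ℝ} (hα : 0 ≤ α) : Monotone (huberScore α) := by
  intro x y hxy
  rw [huber_eq_clamp α x hα, huber_eq_clamp α y hα]
  exact max_le_max le_rfl (min_le_min le_rfl hxy)

lemma huber_lip {α : ℝ} (hα : 0 ≤ α) (x y : ℝ) :
    |huberScore α x - huberScore α y| ≤ |x - y| := by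
  rw [huber_eq_clamp α x hα, huber_eq_clamp α y hα]
  calc |max (-α) (min α x) - max (-α) (min α y)| ≤ |min α x - min α y| := by
        rw [max_comm (-α) _, max_comm (-α) _]; exact abs_max_sub_max_le_abs _ _ _
    _ ≤ |x - y| := by
        have := abs_min_sub_min_le_max α x α y
        simpa using this

lemma huber_sub_self_abs_le {α : ℝ} (hα : 0 < α) (x : ℝ) :
    |huberScore α x - x| ≤ x ^ 2 / α := by
  unfold huberScore
  rcases le_or_gt (|x|) α with h | h
  · simp only [if_pos h, sub_self, abs_zero]
    positivity
  · rw [if_neg (not_le.mpr h)]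
    have hx : x ≠ 0 := by intro h0; rw [h0] at h; simp at h; linarith
    rcases lt_or_gt_of_ne hx with hx | hx
    · rw [Real.sign_of_neg hx]
      have : |x| = -x := abs_of_neg hx
      rw [this] at h
      rw [abs_of_nonneg (by nlinarith), le_div_iff₀ hα]
      nlinarith
    · rw [Real.sign_of_pos hx]
      have : |x| = x := abs_of_pos hx
      rw [this] at h
      rw [abs_of_nonpos (by nlinarith), le_div_iff₀ hα]
      nlinarith

lemma huber_eq_cases {α a b : ℝ} (hα : 0 < α) (hba : b < a)
    (h : huberScore α a = huberScore α b) : α ≤ b ∨ a ≤ -α := by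
  by_contra hc
  push_neg at hc
  obtain ⟨hb, ha⟩ := hc
  rw [huber_eq_clamp α a hα.le, huber_eq_clamp α b hα.le] at h
  rcases le_or_gt α a with h1 | h1
  · rw [min_eq_left h1, max_eq_right (by linarith)] at h
    have : max (-α) (min α b) < α := by
      apply max_lt (by linarith) (lt_of_le_of_lt (min_le_right _ _) hb)
    linarith
  · rw [min_eq_right h1.le, max_eq_right ha.le] at h
    rcases le_or_gt (-α) b with h2 | h2
    · rw [min_eq_right (by linarith), max_eq_right h2] at h; linarith
    · rw [min_eq_right (by linarith), max_eq_left h2.le] at h; linarith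

section Lam

variable {Ω : Type*} [MeasureSpace Ω] [IsProbabilityMeasure (volume : Measure Ω)]

lemma huber_comp_meas (X : Ω → ℝ) (hXmeas : Measurable X) {a : ℝ} (ha : 0 ≤ a) (t : ℝ) :
    Measurable (fun ω => huberScore a (X ω - t)) := by
  have hc : Continuous (fun x : ℝ => huberScore a x) := by
    have : Continuous (fun x : ℝ => max (-a) (min a x)) :=
      continuous_const.max (continuous_const.min continuous_id)
    convert this using 1
    ext x
    exact huber_eq_clamp a x ha
  exact hc.measurable.comp (hXmeas.sub_const t)

lemma huber_comp_int (X : Ω → ℝ) (hXmeas : Measurable X) {a : ℝ} (ha : 0 ≤ a) (t : ℝ) :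
    Integrable (fun ω => huberScore a (X ω - t)) := by
  refine ⟨(huber_comp_meas X hXmeas ha t).aestronglyMeasurable, ?_⟩
  apply HasFiniteIntegral.of_bounded (C := a)
  filter_upwards with ω
  simpa using huber_abs_le ha (X ω - t)

lemma lam_antitone (X : Ω → ℝ) (hXmeas : Measurable X) {a : ℝ} (ha : 0 ≤ a) {s t : ℝ} (hst : s ≤ t) :
    (∫ ω, huberScore a (X ω - t)) ≤ ∫ ω, huberScore a (X ω - s) := by
  apply integral_mono (huber_comp_int X hXmeas ha t) (huber_comp_int X hXmeas ha s)
  intro ω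
  exact huber_mono ha (by linarith)

lemma lam_continuous (X : Ω → ℝ) (hXmeas : Measurable X) {a : ℝ} (ha : 0 ≤ a) :
    Continuous (fun t => ∫ ω, huberScore a (X ω - t)) := by
  have : LipschitzWith 1 (fun t => ∫ ω, huberScore a (X ω - t)) := by
    apply LipschitzWith.of_dist_le_mul
    intro s t
    rw [Real.dist_eq, Real.dist_eq, NNReal.coe_one, one_mul]
    calc |(∫ ω, huberScore a (X ω - s)) - ∫ ω, huberScore a (X ω - t)|
        = |∫ ω, (huberScore a (X ω - s) - huberScore a (X ω - t))| := by
          rw [integral_sub (huber_comp_int X hXmeas ha s) (huber_comp_int X hXmeas ha t)]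
      _ ≤ ∫ ω, |huberScore a (X ω - s) - huberScore a (X ω - t)| := by
          simpa [Real.norm_eq_abs] using
            norm_integral_le_integral_norm (fun ω => huberScore a (X ω - s) - huberScore a (X ω - t))
      _ ≤ ∫ ω, |s - t| := by
          apply integral_mono
          · exact ((huber_comp_int X hXmeas ha s).sub (huber_comp_int X hXmeas ha t)).abs
          · exact integrable_const _
          · intro ω
            have := huber_lip ha (X ω - s) (X ω - t)
            calc |huberScore a (X ω - s) - huberScore a (X ω - t)| ≤ |(X ω - s) - (X ω - t)| := this
              _ = |s - t| := by rw [show (X ω - s) - (X ω - t) = -(s - t) by ring, abs_neg]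
      _ = |s - t| := by simp
  exact this.continuous

lemma integral_sq_shift (X : Ω → ℝ) (hXint : Integrable X)
    (μ : ℝ) (hμ : ∫ ω, X ω = μ) (hXL2 : MemLp X 2) (t : ℝ) :
    (∫ ω, (X ω - t) ^ 2) = (∫ ω, (X ω - μ) ^ 2) + (t - μ) ^ 2 := by
  have hsqμ : Integrable (fun ω => (X ω - μ) ^ 2) := (hXL2.sub (memLp_const μ)).integrable_sq
  have expand : ∀ ω, (X ω - t) ^ 2 = (X ω - μ) ^ 2 + (2 * (μ - t)) * (X ω - μ) + (t - μ) ^ 2 := by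
    intro ω; ring
  have hXμ : Integrable (fun ω => X ω - μ) := hXint.sub (integrable_const μ)
  have hXμ' : Integrable (fun ω => (2 * (μ - t)) * (X ω - μ)) := hXμ.const_mul _
  have hXμ0 : (∫ ω, (X ω - μ)) = 0 := by
    rw [integral_sub hXint (integrable_const μ), hμ, integral_const]
    simp
  calc (∫ ω, (X ω - t) ^ 2)
      = ∫ ω, ((X ω - μ) ^ 2 + (2 * (μ - t)) * (X ω - μ) + (t - μ) ^ 2) := by
        congr 1; ext ω; exact expand ω
    _ = (∫ ω, (X ω - μ) ^ 2) + (∫ ω, (2 * (μ - t)) * (X ω - μ)) + (∫ _ω : Ω, (t - μ) ^ 2) := by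
        have h12 : Integrable (fun ω => (X ω - μ) ^ 2 + (2 * (μ - t)) * (X ω - μ)) :=
          hsqμ.add hXμ'
        rw [integral_add h12 (integrable_const _), integral_add hsqμ hXμ']
    _ = (∫ ω, (X ω - μ) ^ 2) + (t - μ) ^ 2 := by
        rw [integral_const_mul, hXμ0, integral_const]
        simp

lemma unique_aux (X : Ω → ℝ) (hXmeas : Measurable X) {a : ℝ} (ha : 0 < a)
    {s τ : ℝ} (hst : s < τ)
    (heq : (∫ ω, huberScore a (X ω - s)) = ∫ ω, huberScore a (X ω - τ)) :
    ∀ᵐ ω, a ^ 2 ≤ (X ω - s) ^ 2 ∧ a ^ 2 ≤ (X ω - τ) ^ 2 := by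
  have hnn : ∀ ω, 0 ≤ huberScore a (X ω - s) - huberScore a (X ω - τ) := by
    intro ω
    have := huber_mono ha.le (show X ω - τ ≤ X ω - s by linarith)
    linarith
  have hint : Integrable (fun ω => huberScore a (X ω - s) - huberScore a (X ω - τ)) :=
    (huber_comp_int X hXmeas ha.le s).sub (huber_comp_int X hXmeas ha.le τ)
  have hz : (∫ ω, (huberScore a (X ω - s) - huberScore a (X ω - τ))) = 0 := by
    rw [integral_sub (huber_comp_int X hXmeas ha.le s) (huber_comp_int X hXmeas ha.le τ), heq,
      sub_self]
  have hae := (integral_eq_zero_iff_of_nonneg hnn hint).mp hz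
  filter_upwards [hae] with ω hω
  have heqω : huberScore a (X ω - s) = huberScore a (X ω - τ) := by
    have : huberScore a (X ω - s) - huberScore a (X ω - τ) = 0 := hω
    linarith
  rcases huber_eq_cases ha (show X ω - τ < X ω - s by linarith) heqω with h | h
  · constructor <;> nlinarith
  · constructor <;> nlinarith

lemma lam_key_bound (X : Ω → ℝ) (hXmeas : Measurable X) (hXint : Integrable X)
    (μ : ℝ) (hμ : ∫ ω, X ω = μ) (hXL2 : MemLp X 2)
    {a : ℝ} (ha : 0 < a) (t : ℝ) :
    |(∫ ω, huberScore a (X ω - t)) - (μ - t)|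
      ≤ ((∫ ω, (X ω - μ) ^ 2) + (t - μ) ^ 2) / a := by
  have hL2t : MemLp (fun ω => X ω - t) 2 := hXL2.sub (memLp_const t)
  have hsq : Integrable (fun ω => (X ω - t) ^ 2) := hL2t.integrable_sq
  have hsqμ : Integrable (fun ω => (X ω - μ) ^ 2) := (hXL2.sub (memLp_const μ)).integrable_sq
  have hXt : Integrable (fun ω => X ω - t) := hXint.sub (integrable_const t)
  have hmean : (∫ ω, (X ω - t)) = μ - t := by
    rw [integral_sub hXint (integrable_const t), hμ, integral_const]
    simp
  have hsq_eq : (∫ ω, (X ω - t) ^ 2) = (∫ ω, (X ω - μ) ^ 2) + (t - μ) ^ 2 :=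
    integral_sq_shift X hXint μ hμ hXL2 t
  rw [← hsq_eq, ← hmean]
  calc |(∫ ω, huberScore a (X ω - t)) - ∫ ω, (X ω - t)|
      = |∫ ω, (huberScore a (X ω - t) - (X ω - t))| := by
        rw [integral_sub (huber_comp_int X hXmeas ha.le t) hXt]
    _ ≤ ∫ ω, |huberScore a (X ω - t) - (X ω - t)| := by
        simpa [Real.norm_eq_abs] using
          norm_integral_le_integral_norm (fun ω => huberScore a (X ω - t) - (X ω - t))
    _ ≤ ∫ ω, (X ω - t) ^ 2 / a := by
        apply integral_mono (((huber_comp_int X hXmeas ha.le t).sub hXt).abs) (hsq.div_const a)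
        intro ω
        exact huber_sub_self_abs_le ha (X ω - t)
    _ = (∫ ω, (X ω - t) ^ 2) / a := integral_div a _

end Lam

/-- for `X` with mean `μ` and finite variance and `α_n → ∞`, eventually
`λ_n(t) = E ψ_{α_n}(X − t)` has a unique zero `t_n`, and `t_n → μ`. -/
theorem huber_zero_exists_unique_tendsto {Ω : Type*} [MeasureSpace Ω]
    [IsProbabilityMeasure (volume : Measure Ω)]
    (X : Ω → ℝ) (hXmeas : Measurable X) (hXint : Integrable X)
    (μ : ℝ) (hμ : ∫ ω, X ω = μ) (hXL2 : MemLp X 2)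
    (α : ℕ → ℝ) (hαpos : ∀ n, 0 < α n) (hα : Tendsto α atTop atTop) :
    ∃ N : ℕ, ∃ t : ℕ → ℝ,
      (∀ n ≥ N, (∫ ω, huberScore (α n) (X ω - t n)) = 0 ∧
        ∀ s : ℝ, (∫ ω, huberScore (α n) (X ω - s)) = 0 → s = t n) ∧
      Tendsto t atTop (nhds μ) := by
  classical
  set V : ℝ := ∫ ω, (X ω - μ) ^ 2 with hVdef
  have hVnn : 0 ≤ V := integral_nonneg fun ω => sq_nonneg _
  -- choose N with α n ≥ V + 2 for n ≥ N
  obtain ⟨N, hN⟩ := (Filter.eventually_atTop).mp (hα.eventually_ge_atTop (V + 2))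
  set P : ℕ → ℝ → Prop :=
    fun n s => s ∈ Set.Icc (μ - 1) (μ + 1) ∧ (∫ ω, huberScore (α n) (X ω - s)) = 0 with hPdef
  -- existence of a zero in the band, for α n ≥ V + 2
  have hex : ∀ n, V + 2 ≤ α n → ∃ s, P n s := by
    intro n hb
    have ha := hαpos n
    have key := fun u => lam_key_bound X hXmeas hXint μ hμ hXL2 ha u
    have hbound : (V + 1) / α n < 1 := by
      rw [div_lt_one ha]; linarith
    have hpos : 0 < ∫ ω, huberScore (α n) (X ω - (μ - 1)) := by
      have h1 := key (μ - 1)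
      have h2 : (V + (μ - 1 - μ) ^ 2) / α n = (V + 1) / α n := by ring_nf
      rw [h2] at h1
      have := abs_le.mp h1
      have hμ1 : μ - (μ - 1) = 1 := by ring
      rw [hμ1] at this
      linarith [this.1]
    have hneg : (∫ ω, huberScore (α n) (X ω - (μ + 1))) < 0 := by
      have h1 := key (μ + 1)
      have h2 : (V + (μ + 1 - μ) ^ 2) / α n = (V + 1) / α n := by ring_nf
      rw [h2] at h1
      have := abs_le.mp h1
      have hμ1 : μ - (μ + 1) = -1 := by ring
      rw [hμ1] at this
      linarith [this.2]
    have hcont : ContinuousOn (fun u => ∫ ω, huberScore (α n) (X ω - u))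
        (Set.Icc (μ - 1) (μ + 1)) :=
      (lam_continuous X hXmeas ha.le).continuousOn
    have hIVT := intermediate_value_Icc' (by linarith : μ - 1 ≤ μ + 1) hcont
    have h0 : (0 : ℝ) ∈ Set.Icc (∫ ω, huberScore (α n) (X ω - (μ + 1)))
        (∫ ω, huberScore (α n) (X ω - (μ - 1))) := ⟨hneg.le, hpos.le⟩
    obtain ⟨s, hs, hs0⟩ := hIVT h0
    exact ⟨s, hs, hs0⟩
  let t : ℕ → ℝ := fun n => if h : ∃ s, P n s then h.choose else μ
  have ht : ∀ n, (∃ s, P n s) → P n (t n) := by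
    intro n h
    simp only [t, dif_pos h]
    exact h.choose_spec
  -- uniqueness
  have huniq : ∀ n, V + 2 ≤ α n → ∀ s, (∫ ω, huberScore (α n) (X ω - s)) = 0 → s = t n := by
    intro n hb s hs
    have ha := hαpos n
    obtain ⟨hτmem, hτzero⟩ := ht n (hex n hb)
    by_contra hne
    set τ := t n with hτdef
    have hge : α n ^ 2 ≤ ∫ ω, (X ω - τ) ^ 2 := by
      have hae : ∀ᵐ ω, α n ^ 2 ≤ (X ω - τ) ^ 2 := by
        rcases lt_or_gt_of_ne hne with h | h
        · filter_upwards [unique_aux X hXmeas ha h (by rw [hs, hτzero])] with ω hω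
          exact hω.2
        · filter_upwards [unique_aux X hXmeas ha h (by rw [hs, hτzero])] with ω hω
          exact hω.1
      have hsq : Integrable (fun ω => (X ω - τ) ^ 2) :=
        (hXL2.sub (memLp_const τ)).integrable_sq
      calc α n ^ 2 = ∫ _ω : Ω, (α n ^ 2 : ℝ) := by rw [integral_const]; simp
        _ ≤ ∫ ω, (X ω - τ) ^ 2 := integral_mono_ae (integrable_const _) hsq hae
    rw [integral_sq_shift X hXint μ hμ hXL2 τ, ← hVdef] at hge
    have hτ1 : (τ - μ) ^ 2 ≤ 1 := by
      obtain ⟨h1, h2⟩ := hτmem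
      nlinarith
    nlinarith
  refine ⟨N, t, fun n hn => ⟨(ht n (hex n (hN n hn))).2, huniq n (hN n hn)⟩, ?_⟩
  -- convergence
  rw [Metric.tendsto_atTop]
  intro ε hε
  set ε' : ℝ := min ε 1 with hε'def
  have hε'pos : 0 < ε' := lt_min hε one_pos
  have hε'le1 : ε' ≤ 1 := min_le_right _ _
  have hε'leε : ε' ≤ ε := min_le_left _ _
  obtain ⟨N2, hN2⟩ := (Filter.eventually_atTop).mp
    (hα.eventually_ge_atTop ((V + 1) / ε' + 1))
  refine ⟨max N N2, fun n hn => ?_⟩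
  have hnN : N ≤ n := le_trans (le_max_left _ _) hn
  have hnN2 : N2 ≤ n := le_trans (le_max_right _ _) hn
  have hb := hN n hnN
  have hb2 := hN2 n hnN2
  have ha := hαpos n
  obtain ⟨hτmem, hτzero⟩ := ht n (hex n hb)
  have key := fun u => lam_key_bound X hXmeas hXint μ hμ hXL2 ha u
  have hsmall : (V + ε' ^ 2) / α n < ε' := by
    rw [div_lt_iff₀ ha]
    have h1 : (V + 1) / ε' < α n := by linarith
    rw [div_lt_iff₀ hε'pos] at h1
    nlinarith
  have hpos : 0 < ∫ ω, huberScore (α n) (X ω - (μ - ε')) := by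
    have h1 := key (μ - ε')
    have h2 : (V + (μ - ε' - μ) ^ 2) / α n = (V + ε' ^ 2) / α n := by ring_nf
    rw [h2] at h1
    have h3 := (abs_le.mp h1).1
    have h4 : μ - (μ - ε') = ε' := by ring
    rw [h4] at h3
    linarith
  have hneg : (∫ ω, huberScore (α n) (X ω - (μ + ε'))) < 0 := by
    have h1 := key (μ + ε')
    have h2 : (V + (μ + ε' - μ) ^ 2) / α n = (V + ε' ^ 2) / α n := by ring_nf
    rw [h2] at h1
    have h3 := (abs_le.mp h1).2
    have h4 : μ - (μ + ε') = -ε' := by ring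
    rw [h4] at h3
    linarith
  have hlow : μ - ε' < t n := by
    by_contra hc
    push_neg at hc
    have := lam_antitone X hXmeas ha.le hc
    rw [hτzero] at this
    linarith
  have hhigh : t n < μ + ε' := by
    by_contra hc
    push_neg at hc
    have := lam_antitone X hXmeas ha.le hc
    rw [hτzero] at this
    linarith
  rw [Real.dist_eq, abs_lt]
  constructor <;> [linarith; linarith]
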